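/- Let σ ⊆ ℝⁿ be a strongly convex rational polyhedral cone generated by finitely many vectors of ℤⁿ. Then the additive monoid S_σ = σ ∩ ℤⁿ admits a finite Hilbert basis: S_σ is finitely generated, its set of irreducible elements is finite, and this set generates S_σ (it is the smallest generating set with respect to inclusion). -/

import Mathlib

open scoped BigOperators

/-- The real-coordinate vector attached to an integer vector. -/
def toR {n : ℕ} (u : Fin n → ℤ) : Fin n → ℝ := fun j => (u j : ℝ)

/-- The rational polyhedral cone generated by integer vectors `v 0, …, v (r-1)`:
all nonnegative real linear combinations of the generators. -/
def coneOf {n r : ℕ} (v : Fin r → (Fin n → ℤ)) : Set (Fin n → ℝ) :=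
  { x | ∃ c : Fin r → ℝ, (∀ i, 0 ≤ c i) ∧ x = ∑ i, c i • toR (v i) }

/-- The lattice points of a subset of `ℝⁿ`: `S_σ = σ ∩ ℤⁿ`. -/
def latticePoints {n : ℕ} (σ : Set (Fin n → ℝ)) : Set (Fin n → ℤ) :=
  { u | toR u ∈ σ }

/-- `u` is an irreducible element of `S`: it is a nonzero element of `S` which cannot be
written as the sum of two nonzero elements of `S`. -/
def IsIrreducibleElt {n : ℕ} (S : Set (Fin n → ℤ)) (u : Fin n → ℤ) : Prop :=
  u ∈ S ∧ u ≠ 0 ∧ ∀ a b : Fin n → ℤ, a ∈ S → b ∈ S → u = a + b → a = 0 ∨ b = 0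

/-- The Hilbert basis of (the monoid of lattice points of) a cone:
the set of its irreducible elements. -/
def hilbertBasis {n : ℕ} (S : Set (Fin n → ℤ)) : Set (Fin n → ℤ) :=
  { u | IsIrreducibleElt S u }

section aux

variable {n r : ℕ} {v : Fin r → (Fin n → ℤ)}

lemma toR_zero : toR (0 : Fin n → ℤ) = 0 := by funext j; simp [toR]

lemma toR_sub (a b : Fin n → ℤ) : toR (a - b) = toR a - toR b := by
  funext j; simp [toR]

lemma toR_eq_zero {u : Fin n → ℤ} (h : toR u = 0) : u = 0 := by
  funext j
  have h2 := congrFun h j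
  simp only [toR, Pi.zero_apply] at h2
  exact_mod_cast h2

lemma cone_zero : (0 : Fin n → ℝ) ∈ coneOf v :=
  ⟨0, fun _ => le_refl 0, by simp⟩

lemma cone_add {x y : Fin n → ℝ} (hx : x ∈ coneOf v) (hy : y ∈ coneOf v) :
    x + y ∈ coneOf v := by
  obtain ⟨c, hc, rfl⟩ := hx; obtain ⟨d, hd, rfl⟩ := hy
  exact ⟨c + d, fun i => add_nonneg (hc i) (hd i),
    by simp [add_smul, Finset.sum_add_distrib]⟩

lemma cone_smul_gen (t : ℝ) (ht : 0 ≤ t) (i : Fin r) :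
    t • toR (v i) ∈ coneOf v := by
  classical
  refine ⟨fun k => if k = i then t else 0, fun k => by by_cases h : k = i <;> simp [h, ht], ?_⟩
  simp [ite_smul, Finset.sum_ite_eq']

lemma cone_gen (i : Fin r) : toR (v i) ∈ coneOf v := by
  simpa using cone_smul_gen (v := v) 1 zero_le_one i

lemma lp_zero : (0 : Fin n → ℤ) ∈ latticePoints (coneOf v) := by
  show toR 0 ∈ coneOf v
  rw [toR_zero]; exact cone_zero

lemma lp_add {a b : Fin n → ℤ} (ha : a ∈ latticePoints (coneOf v))
    (hb : b ∈ latticePoints (coneOf v)) : a + b ∈ latticePoints (coneOf v) := by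
  show toR (a + b) ∈ coneOf v
  have : toR (a + b) = toR a + toR b := by funext j; simp [toR]
  rw [this]; exact cone_add ha hb

lemma sum_update_smul (v : Fin r → Fin n → ℤ) (c : Fin r → ℝ) (j : Fin r) (t : ℝ) :
    ∑ i, Function.update c j t i • toR (v i)
      = (∑ i, c i • toR (v i)) - c j • toR (v j) + t • toR (v j) := by
  classical
  have h : ∀ d : Fin r → ℝ, ∑ i, d i • toR (v i)
      = d j • toR (v j) + ∑ i ∈ Finset.univ.erase j, d i • toR (v i) :=
    fun d => (Finset.add_sum_erase _ (fun i => d i • toR (v i)) (Finset.mem_univ j)).symm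
  rw [h, h c]
  have he : ∑ i ∈ Finset.univ.erase j, Function.update c j t i • toR (v i)
      = ∑ i ∈ Finset.univ.erase j, c i • toR (v i) :=
    Finset.sum_congr rfl fun i hi => by
      rw [Function.update_of_ne (Finset.ne_of_mem_erase hi)]
  rw [he, Function.update_self]
  abel

lemma exists_pos_functional (v : Fin r → (Fin n → ℤ))
    (hsc : ∀ x : Fin n → ℝ, x ∈ coneOf v → -x ∈ coneOf v → x = 0) :
    ∃ ℓ : (Fin n → ℝ) →L[ℝ] ℝ,
      (∀ i, 0 ≤ ℓ (toR (v i))) ∧ (∀ i, v i ≠ 0 → 0 < ℓ (toR (v i))) := by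
  classical
  set Δ : Set (Fin r → ℝ) :=
    stdSimplex ℝ (Fin r) ∩ {w | ∀ i, v i = 0 → w i = 0} with hΔdef
  set f : (Fin r → ℝ) → (Fin n → ℝ) := fun w => ∑ i, w i • toR (v i) with hfdef
  have hfc : Continuous f := by
    apply continuous_finset_sum
    intro i _
    exact (continuous_apply i).smul continuous_const
  have hclosed2 : IsClosed {w : Fin r → ℝ | ∀ i, v i = 0 → w i = 0} := by
    have heq : {w : Fin r → ℝ | ∀ i, v i = 0 → w i = 0}
        = ⋂ i, {w : Fin r → ℝ | v i = 0 → w i = 0} := by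
      ext w; simp
    rw [heq]
    refine isClosed_iInter fun i => ?_
    by_cases h : v i = 0
    · simpa [h] using isClosed_eq (continuous_apply i) (continuous_const : Continuous fun _ : Fin r → ℝ => (0:ℝ))
    · simp [h]
  have hΔc : IsCompact Δ :=
    (isCompact_stdSimplex ℝ (Fin r)).of_isClosed_subset
      ((isClosed_stdSimplex ℝ (Fin r)).inter hclosed2) Set.inter_subset_left
  have hΔconv : Convex ℝ Δ := by
    refine (convex_stdSimplex ℝ (Fin r)).inter ?_
    intro w hw w' hw' a b ha hb hab
    intro i hi
    have h1 := hw i hi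
    have h2 := hw' i hi
    simp only [Pi.add_apply, Pi.smul_apply] at ⊢
    simp [h1, h2]
  have hlin : IsLinearMap ℝ f := by
    constructor
    · intro w w'
      simp [hfdef, add_smul, Finset.sum_add_distrib]
    · intro a w
      simp [hfdef, smul_smul, Finset.smul_sum]
  have hDconv : Convex ℝ (f '' Δ) := hΔconv.is_linear_image hlin
  have hDclosed : IsClosed (f '' Δ) := (hΔc.image hfc).isClosed
  have h0 : (0 : Fin n → ℝ) ∉ f '' Δ := by
    rintro ⟨w, ⟨⟨hw0, hws⟩, hwz⟩, hsum⟩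
    have hj : ∃ j, w j ≠ 0 := by
      by_contra h
      push_neg at h
      simp [h] at hws
    obtain ⟨j, hj⟩ := hj
    have hwjpos : 0 < w j := lt_of_le_of_ne (hw0 j) (Ne.symm hj)
    have hvj : v j ≠ 0 := fun h => hj (hwz j h)
    set x : Fin n → ℝ := w j • toR (v j) with hxdef
    have hx : x ∈ coneOf v := cone_smul_gen (w j) (le_of_lt hwjpos) j
    have hnx : -x ∈ coneOf v := by
      refine ⟨Function.update w j 0, ?_, ?_⟩
      · intro k
        by_cases h : k = j
        · subst h; simp
        · rw [Function.update_of_ne h]; exact hw0 k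
      · rw [sum_update_smul]
        rw [show ∑ i, w i • toR (v i) = f w from rfl, hsum]
        simp [hxdef]
    have := hsc x hx hnx
    rw [hxdef] at this
    rcases smul_eq_zero.mp this with h | h
    · exact hj h
    · exact hvj (toR_eq_zero h)
  obtain ⟨g, u, hgu, hD⟩ := geometric_hahn_banach_point_closed hDconv hDclosed h0
  have hu0 : 0 < u := by simpa using hgu
  have hmem : ∀ i, v i ≠ 0 → toR (v i) ∈ f '' Δ := by
    intro i hi
    refine ⟨fun k => if k = i then 1 else 0, ⟨⟨fun k => by by_cases h : k = i <;> simp [h], by simp⟩, ?_⟩, ?_⟩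
    · intro k hk
      by_cases h : k = i
      · subst h; exact absurd hk hi
      · simp [h]
    · simp [hfdef, ite_smul, Finset.sum_ite_eq']
  have hposg : ∀ i, v i ≠ 0 → 0 < g (toR (v i)) :=
    fun i hi => lt_trans hu0 (hD _ (hmem i hi))
  refine ⟨g, fun i => ?_, hposg⟩
  by_cases h : v i = 0
  · rw [h, toR_zero]; simp
  · exact le_of_lt (hposg i h)

lemma ell_nonneg_on_cone (ℓ : (Fin n → ℝ) →L[ℝ] ℝ)
    (hnn : ∀ i, 0 ≤ ℓ (toR (v i))) : ∀ y ∈ coneOf v, 0 ≤ ℓ y := by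
  rintro y ⟨c, hc, rfl⟩
  rw [map_sum]
  refine Finset.sum_nonneg fun i _ => ?_
  rw [map_smul]
  exact mul_nonneg (hc i) (hnn i)

lemma slice_finite (v : Fin r → (Fin n → ℤ)) (ℓ : (Fin n → ℝ) →L[ℝ] ℝ)
    (hnn : ∀ i, 0 ≤ ℓ (toR (v i))) (hpos : ∀ i, v i ≠ 0 → 0 < ℓ (toR (v i))) (B : ℝ) :
    {x : Fin n → ℤ | toR x ∈ coneOf v ∧ ℓ (toR x) ≤ B}.Finite := by
  classical
  set β : Fin r → ℝ := fun i => if h : v i = 0 then 0 else max B 0 / ℓ (toR (v i)) with hβ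
  set C : Fin n → ℝ := fun j => ∑ i, β i * |(v i j : ℝ)| with hC
  have key : ∀ x ∈ {x : Fin n → ℤ | toR x ∈ coneOf v ∧ ℓ (toR x) ≤ B},
      ∀ j, |(x j : ℝ)| ≤ C j := by
    rintro x ⟨⟨c, hc, hx⟩, hB⟩ j
    have hl : ℓ (toR x) = ∑ i, c i * ℓ (toR (v i)) := by
      rw [hx, map_sum]
      exact Finset.sum_congr rfl fun i _ => by rw [map_smul]; rfl
    have hterm : ∀ i, c i * ℓ (toR (v i)) ≤ max B 0 := by
      intro i
      refine le_trans (Finset.single_le_sum (f := fun k => c k * ℓ (toR (v k)))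
        (fun k _ => mul_nonneg (hc k) (hnn k)) (Finset.mem_univ i)) ?_
      rw [← hl]
      exact le_trans hB (le_max_left _ _)
    have hci : ∀ i, c i * |(v i j : ℝ)| ≤ β i * |(v i j : ℝ)| := by
      intro i
      by_cases h : v i = 0
      · have : v i j = 0 := congrFun h j
        simp [this]
      · have hp := hpos i h
        have hle : c i ≤ β i := by
          rw [hβ]
          simp only [dif_neg h]
          rw [le_div_iff₀ hp]
          exact hterm i
        exact mul_le_mul_of_nonneg_right hle (abs_nonneg _)
    have hxj : (x j : ℝ) = ∑ i, c i * (v i j : ℝ) := by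
      have := congrFun hx j
      simpa [toR] using this
    calc |(x j : ℝ)| = |∑ i, c i * (v i j : ℝ)| := by rw [hxj]
      _ ≤ ∑ i, |c i * (v i j : ℝ)| := Finset.abs_sum_le_sum_abs _ _
      _ = ∑ i, c i * |(v i j : ℝ)| := by
          refine Finset.sum_congr rfl fun i _ => ?_
          rw [abs_mul, abs_of_nonneg (hc i)]
      _ ≤ ∑ i, β i * |(v i j : ℝ)| := Finset.sum_le_sum fun i _ => hci i
      _ = C j := rfl
  refine Set.Finite.subset (Set.finite_Icc (fun j => -⌈C j⌉) (fun j => ⌈C j⌉)) ?_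
  intro x hx
  refine Set.mem_Icc.mpr ⟨fun j => ?_, fun j => ?_⟩
  · have h1 := (abs_le.mp (key x hx j)).1
    have h2 : ((-⌈C j⌉ : ℤ) : ℝ) ≤ (x j : ℝ) := by
      push_cast
      linarith [Int.le_ceil (C j)]
    exact_mod_cast h2
  · have h1 := (abs_le.mp (key x hx j)).2
    have h2 : (x j : ℝ) ≤ ((⌈C j⌉ : ℤ) : ℝ) := by
      push_cast
      linarith [Int.le_ceil (C j)]
    exact_mod_cast h2

lemma between_finite (v : Fin r → (Fin n → ℤ)) (ℓ : (Fin n → ℝ) →L[ℝ] ℝ)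
    (hnn : ∀ i, 0 ≤ ℓ (toR (v i))) (hpos : ∀ i, v i ≠ 0 → 0 < ℓ (toR (v i)))
    (u : Fin n → ℤ) :
    {x : Fin n → ℤ | toR x ∈ coneOf v ∧ toR (u - x) ∈ coneOf v}.Finite := by
  refine Set.Finite.subset (slice_finite v ℓ hnn hpos (ℓ (toR u))) ?_
  rintro x ⟨hx, hux⟩
  refine ⟨hx, ?_⟩
  have h1 : 0 ≤ ℓ (toR (u - x)) := ell_nonneg_on_cone ℓ hnn _ hux
  rw [toR_sub, map_sub] at h1
  linarith

end aux

section main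

variable {n r : ℕ} {v : Fin r → (Fin n → ℤ)}

lemma mem_closure_hilbert (v : Fin r → (Fin n → ℤ))
    (hsc : ∀ x : Fin n → ℝ, x ∈ coneOf v → -x ∈ coneOf v → x = 0)
    (ℓ : (Fin n → ℝ) →L[ℝ] ℝ)
    (hnn : ∀ i, 0 ≤ ℓ (toR (v i))) (hpos : ∀ i, v i ≠ 0 → 0 < ℓ (toR (v i))) :
    ∀ N : ℕ, ∀ u : Fin n → ℤ, u ∈ latticePoints (coneOf v) →
      {x : Fin n → ℤ | toR x ∈ coneOf v ∧ toR (u - x) ∈ coneOf v}.ncard ≤ N →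
      u ∈ AddSubmonoid.closure (hilbertBasis (latticePoints (coneOf v))) := by
  intro N
  induction N with
  | zero =>
    intro u hu hcard
    exfalso
    have humem : u ∈ {x : Fin n → ℤ | toR x ∈ coneOf v ∧ toR (u - x) ∈ coneOf v} := by
      refine ⟨hu, ?_⟩
      simp only [sub_self, toR_zero]
      exact cone_zero
    have hpos' : 0 < {x : Fin n → ℤ | toR x ∈ coneOf v ∧ toR (u - x) ∈ coneOf v}.ncard :=
      (Set.ncard_pos (between_finite v ℓ hnn hpos u)).mpr ⟨u, humem⟩
    omega
  | succ N ih =>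
    intro u hu hcard
    by_cases h0 : u = 0
    · subst h0; exact zero_mem _
    by_cases hirr : IsIrreducibleElt (latticePoints (coneOf v)) u
    · exact AddSubmonoid.subset_closure hirr
    have hdec : ∃ a b : Fin n → ℤ, a ∈ latticePoints (coneOf v) ∧
        b ∈ latticePoints (coneOf v) ∧ u = a + b ∧ a ≠ 0 ∧ b ≠ 0 := by
      unfold IsIrreducibleElt at hirr
      push_neg at hirr
      obtain ⟨a, b, ha, hb, heq, hab⟩ := hirr hu h0
      exact ⟨a, b, ha, hb, heq, hab.1, hab.2⟩
    obtain ⟨a, b, ha, hb, heq, ha0, hb0⟩ := hdec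
    have key : ∀ p q : Fin n → ℤ, p ∈ latticePoints (coneOf v) →
        q ∈ latticePoints (coneOf v) → q ≠ 0 → u = p + q →
        {x : Fin n → ℤ | toR x ∈ coneOf v ∧ toR (p - x) ∈ coneOf v}.ncard ≤ N := by
      intro p q hp hq hq0 hpq
      have hss : {x : Fin n → ℤ | toR x ∈ coneOf v ∧ toR (p - x) ∈ coneOf v}
          ⊂ {x : Fin n → ℤ | toR x ∈ coneOf v ∧ toR (u - x) ∈ coneOf v} := by
        constructor
        · rintro x ⟨hx, hpx⟩
          refine ⟨hx, ?_⟩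
          have he : u - x = (p - x) + q := by rw [hpq]; ring
          rw [he]
          have : toR ((p - x) + q) = toR (p - x) + toR q := by funext j; simp [toR]
          rw [this]
          exact cone_add hpx hq
        · intro hsub
          have humem : u ∈ {x : Fin n → ℤ | toR x ∈ coneOf v ∧ toR (u - x) ∈ coneOf v} := by
            refine ⟨hu, ?_⟩
            simp only [sub_self, toR_zero]
            exact cone_zero
          have hup := hsub humem
          obtain ⟨-, hpu⟩ := hup
          have hpu' : toR (p - u) = -(toR q) := by
            have : p - u = -q := by rw [hpq]; ring
            rw [this]
            funext j; simp [toR]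
          rw [hpu'] at hpu
          have := hsc (toR q) hq hpu
          exact hq0 (toR_eq_zero this)
      have := Set.ncard_lt_ncard hss (between_finite v ℓ hnn hpos u)
      omega
    have hca : a ∈ AddSubmonoid.closure (hilbertBasis (latticePoints (coneOf v))) :=
      ih a ha (key a b ha hb hb0 heq)
    have hcb : b ∈ AddSubmonoid.closure (hilbertBasis (latticePoints (coneOf v))) :=
      ih b hb (key b a hb ha ha0 (by rw [heq]; ring))
    rw [heq]
    exact add_mem hca hcb

lemma hb_finite (v : Fin r → (Fin n → ℤ)) (ℓ : (Fin n → ℝ) →L[ℝ] ℝ)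
    (hnn : ∀ i, 0 ≤ ℓ (toR (v i))) (hpos : ∀ i, v i ≠ 0 → 0 < ℓ (toR (v i))) :
    (hilbertBasis (latticePoints (coneOf v))).Finite := by
  classical
  have hsub : hilbertBasis (latticePoints (coneOf v)) ⊆
      Set.range v ∪ {x : Fin n → ℤ | toR x ∈ coneOf v ∧ ℓ (toR x) ≤ ∑ i, ℓ (toR (v i))} := by
    rintro u ⟨huS, hu0, hirr⟩
    obtain ⟨c, hc, hx⟩ := huS
    by_cases hex : ∃ j, v j ≠ 0 ∧ 1 ≤ c j
    · obtain ⟨j, hvj, hcj⟩ := hex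
      left
      have hbS : (u - v j) ∈ latticePoints (coneOf v) := by
        refine ⟨Function.update c j (c j - 1), ?_, ?_⟩
        · intro k
          by_cases h : k = j
          · subst h; rw [Function.update_self]; linarith
          · rw [Function.update_of_ne h]; exact hc k
        · rw [sum_update_smul, ← hx, toR_sub, sub_smul, one_smul]
          abel
      have hvjS : v j ∈ latticePoints (coneOf v) := cone_gen j
      rcases hirr (v j) (u - v j) hvjS hbS (by ring) with h | h
      · exact absurd h hvj
      · have : u = v j := by
          have := sub_eq_zero.mp h
          exact this
        exact ⟨j, this.symm⟩
    · right
      push_neg at hex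
      refine ⟨⟨c, hc, hx⟩, ?_⟩
      have hl : ℓ (toR u) = ∑ i, c i * ℓ (toR (v i)) := by
        rw [hx, map_sum]
        exact Finset.sum_congr rfl fun i _ => by rw [map_smul]; rfl
      rw [hl]
      refine Finset.sum_le_sum fun i _ => ?_
      by_cases h : v i = 0
      · rw [h, toR_zero]
        simp
      · have h1 := hex i h
        have h2 := hpos i h
        nlinarith [hc i]
  exact Set.Finite.subset ((Set.finite_range v).union
    (slice_finite v ℓ hnn hpos (∑ i, ℓ (toR (v i))))) hsub

lemma hb_subset_gen {S : Set (Fin n → ℤ)} {G : Set (Fin n → ℤ)}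
    (hG : (AddSubmonoid.closure G : Set (Fin n → ℤ)) = S) :
    hilbertBasis S ⊆ G := by
  rintro u ⟨huS, hu0, hirr⟩
  have humem : u ∈ AddSubmonoid.closure G := by
    rw [← hG] at huS
    exact huS
  obtain ⟨l, hl, hsum⟩ := AddSubmonoid.exists_list_of_mem_closure humem
  clear humem
  induction l with
  | nil =>
    exfalso
    apply hu0
    rw [← hsum, List.sum_nil]
  | cons g t iht =>
    have hgG : g ∈ G := hl g List.mem_cons_self
    have htG : ∀ y ∈ t, y ∈ G := fun y hy => hl y (List.mem_cons_of_mem _ hy)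
    have hgS : g ∈ S := by
      rw [← hG]
      exact AddSubmonoid.subset_closure hgG
    have htS : t.sum ∈ S := by
      rw [← hG]
      exact AddSubmonoid.list_sum_mem _ fun y hy => AddSubmonoid.subset_closure (htG y hy)
    rw [List.sum_cons] at hsum
    rcases hirr g t.sum hgS htS hsum.symm with h | h
    · refine iht htG ?_
      rw [← hsum, h, zero_add]
    · rw [← hsum, h, add_zero] at *
      exact hgG

end main

/-- for a strongly convex rational polyhedral cone `σ ⊆ ℝⁿ` generated by
finitely many integer vectors, the additive monoid `S_σ = σ ∩ ℤⁿ` is finitely generated,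
its set of irreducible elements (the Hilbert basis) is finite, it generates `S_σ`, and it is
the smallest generating set with respect to inclusion. -/
theorem hilbert_basis_finite_exists {n r : ℕ} (v : Fin r → (Fin n → ℤ))
    (hsc : ∀ x : Fin n → ℝ, x ∈ coneOf v → -x ∈ coneOf v → x = 0) :
    (∃ T : Finset (Fin n → ℤ),
        (AddSubmonoid.closure (T : Set (Fin n → ℤ)) : Set (Fin n → ℤ))
          = latticePoints (coneOf v)) ∧
    (hilbertBasis (latticePoints (coneOf v))).Finite ∧
    (AddSubmonoid.closure (hilbertBasis (latticePoints (coneOf v))) : Set (Fin n → ℤ))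
      = latticePoints (coneOf v) ∧
    (∀ G : Set (Fin n → ℤ),
        (AddSubmonoid.closure G : Set (Fin n → ℤ)) = latticePoints (coneOf v) →
        hilbertBasis (latticePoints (coneOf v)) ⊆ G) := by
    classical
  obtain ⟨ℓ, hnn, hpos⟩ := exists_pos_functional v hsc
  set S := latticePoints (coneOf v) with hSdef
  -- S as a submonoid
  set Smon : AddSubmonoid (Fin n → ℤ) :=
    { carrier := S
      zero_mem' := lp_zero
      add_mem' := fun ha hb => lp_add ha hb } with hSmon
  have hgen : (AddSubmonoid.closure (hilbertBasis S) : Set (Fin n → ℤ)) = S := by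
    apply subset_antisymm
    · have hle : AddSubmonoid.closure (hilbertBasis S) ≤ Smon := by
        rw [AddSubmonoid.closure_le]
        rintro u ⟨huS, -, -⟩
        exact huS
      exact hle
    · intro u hu
      exact mem_closure_hilbert v hsc ℓ hnn hpos
        ({x : Fin n → ℤ | toR x ∈ coneOf v ∧ toR (u - x) ∈ coneOf v}.ncard) u hu le_rfl
  have hfin : (hilbertBasis S).Finite := hb_finite v ℓ hnn hpos
  refine ⟨⟨hfin.toFinset, ?_⟩, hfin, hgen, fun G hG => hb_subset_gen hG⟩
  rw [Set.Finite.coe_toFinset]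
  exact hgen
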